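/- Let 0 < a < b, c > 1, and 0 < α < α_c := sqrt((c^2-1)/(b c^2 - a)). Define Ŝ(ξ) = sqrt((1 + a ξ^2)/(1 + b ξ^2)). Then for all real k ≠ 0, with ξ = k + iα, the modulus satisfies sqrt(a/b) < |Ŝ(ξ)| < sqrt((1 - a α^2)/(1 - b α^2)) < c. -/

import Mathlib

open Complex

set_option maxHeartbeats 1000000 in
/-- For `0 < a < b`, `c > 1`, `0 < α < α_c`, and real `k ≠ 0`, with `ξ = k + iα`:
`√(a/b) < |Ŝ(ξ)| < √((1-aα²)/(1-bα²)) < c`, where `Ŝ(ξ) = √((1+aξ²)/(1+bξ²))`. -/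
theorem abs_S_bounds (a b c α : ℝ) (ha : 0 < a) (hab : a < b) (hc : 1 < c)
    (hα : 0 < α) (hαc : α < Real.sqrt ((c ^ 2 - 1) / (b * c ^ 2 - a)))
    (k : ℝ) (hk : k ≠ 0) :
    let ξ : ℂ := (k : ℂ) + (α : ℂ) * Complex.I
    let S : ℂ := ((1 + (a : ℂ) * ξ ^ 2) / (1 + (b : ℂ) * ξ ^ 2)) ^ ((1 : ℂ) / 2)
    Real.sqrt (a / b) < ‖S‖ ∧
      ‖S‖ < Real.sqrt ((1 - a * α ^ 2) / (1 - b * α ^ 2)) ∧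
      Real.sqrt ((1 - a * α ^ 2) / (1 - b * α ^ 2)) < c := by
  intro ξ S
  have hk2 : 0 < k ^ 2 := by positivity
  have hb : 0 < b := ha.trans hab
  have hbca : 0 < b * c ^ 2 - a := by nlinarith [mul_pos hb (show (0:ℝ) < c ^ 2 - 1 by nlinarith)]
  have hα2 : α ^ 2 * (b * c ^ 2 - a) < c ^ 2 - 1 := by
    have h1 : α ^ 2 < (c ^ 2 - 1) / (b * c ^ 2 - a) := by
      rwa [Real.lt_sqrt hα.le] at hαc
    calc α ^ 2 * (b * c ^ 2 - a) < ((c ^ 2 - 1) / (b * c ^ 2 - a)) * (b * c ^ 2 - a) :=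
          mul_lt_mul_of_pos_right h1 hbca
      _ = c ^ 2 - 1 := by rw [div_mul_cancel₀ _ hbca.ne']
  have hqb : b * α ^ 2 < 1 := by nlinarith
  have hq : 0 < 1 - b * α ^ 2 := by linarith
  have hp : 0 < 1 - a * α ^ 2 := by nlinarith
  have hN : Complex.normSq (1 + (a : ℂ) * ξ ^ 2)
      = (1 + a * (k ^ 2 - α ^ 2)) ^ 2 + (2 * a * k * α) ^ 2 := by
    simp only [ξ, Complex.normSq_apply, Complex.add_re, Complex.add_im, Complex.mul_re,
      Complex.mul_im, Complex.one_re, Complex.one_im, Complex.ofReal_re, Complex.ofReal_im,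
      Complex.I_re, Complex.I_im, pow_two]
    ring
  have hD : Complex.normSq (1 + (b : ℂ) * ξ ^ 2)
      = (1 + b * (k ^ 2 - α ^ 2)) ^ 2 + (2 * b * k * α) ^ 2 := by
    simp only [ξ, Complex.normSq_apply, Complex.add_re, Complex.add_im, Complex.mul_re,
      Complex.mul_im, Complex.one_re, Complex.one_im, Complex.ofReal_re, Complex.ofReal_im,
      Complex.I_re, Complex.I_im, pow_two]
    ring
  obtain ⟨N, hNdef⟩ : ∃ x : ℝ, x = (1 + a * (k ^ 2 - α ^ 2)) ^ 2 + (2 * a * k * α) ^ 2 := ⟨_, rfl⟩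
  obtain ⟨D, hDdef⟩ : ∃ x : ℝ, x = (1 + b * (k ^ 2 - α ^ 2)) ^ 2 + (2 * b * k * α) ^ 2 := ⟨_, rfl⟩
  rw [← hNdef] at hN
  rw [← hDdef] at hD
  have hNpos : 0 < N := by
    rw [hNdef]
    have : 0 < (2 * a * k * α) ^ 2 := by positivity
    nlinarith [sq_nonneg (1 + a * (k ^ 2 - α ^ 2))]
  have hDpos : 0 < D := by
    rw [hDdef]
    have : 0 < (2 * b * k * α) ^ 2 := by positivity
    nlinarith [sq_nonneg (1 + b * (k ^ 2 - α ^ 2))]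
  have hnum : (1 + (a : ℂ) * ξ ^ 2) ≠ 0 := Complex.normSq_pos.mp (hN ▸ hNpos)
  have hden : (1 + (b : ℂ) * ξ ^ 2) ≠ 0 := Complex.normSq_pos.mp (hD ▸ hDpos)
  have habsz : ‖(1 + (a : ℂ) * ξ ^ 2) / (1 + (b : ℂ) * ξ ^ 2)‖
      = Real.sqrt (N / D) := by
    rw [norm_div, Complex.norm_def, Complex.norm_def, hN, hD,
      Real.sqrt_div hNpos.le D]
  have habsS : ‖S‖ = Real.sqrt (Real.sqrt (N / D)) := by
    have hS : S = ((1 + (a : ℂ) * ξ ^ 2) / (1 + (b : ℂ) * ξ ^ 2)) ^ (((1 / 2 : ℝ) : ℂ)) := by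
      simp only [S]
      norm_num
    rw [hS, Complex.norm_cpow_real, habsz, ← Real.sqrt_eq_rpow]
  have hND : 0 < N / D := div_pos hNpos hDpos
  refine ⟨?_, ?_, ?_⟩
  · rw [habsS]
    apply Real.sqrt_lt_sqrt (by positivity)
    rw [Real.lt_sqrt (by positivity)]
    rw [div_pow, div_lt_div_iff₀ (by positivity) hDpos, hNdef, hDdef]
    have h3 : 0 < (b - a) * (a + b + 2 * a * b * (k ^ 2 - α ^ 2)) := by
      have h4 : 2 * a * b * α ^ 2 < 2 * a := by nlinarith
      have h5 : 0 < a + b + 2 * a * b * (k ^ 2 - α ^ 2) := by nlinarith [mul_pos (mul_pos ha hb) hk2]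
      exact mul_pos (sub_pos.mpr hab) h5
    have hEq : ((1 + a * (k ^ 2 - α ^ 2)) ^ 2 + (2 * a * k * α) ^ 2) * b ^ 2
        - a ^ 2 * ((1 + b * (k ^ 2 - α ^ 2)) ^ 2 + (2 * b * k * α) ^ 2)
        = (b - a) * (a + b + 2 * a * b * (k ^ 2 - α ^ 2)) := by ring
    linarith [h3, hEq]
  · rw [habsS]
    have hRpos : 0 < (1 - a * α ^ 2) / (1 - b * α ^ 2) := div_pos hp hq
    apply Real.sqrt_lt_sqrt (Real.sqrt_nonneg _)
    rw [Real.sqrt_lt' hRpos]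
    rw [div_pow, div_lt_div_iff₀ hDpos (pow_pos hq 2), hNdef, hDdef]
    have h1 : 0 < 2 * ((1 - a * α ^ 2) * (1 - b * α ^ 2)) * k ^ 2 * (b - a) :=
      mul_pos (mul_pos (mul_pos two_pos (mul_pos hp hq)) hk2) (sub_pos.mpr hab)
    have h2 : 0 < (k ^ 4 + 4 * k ^ 2 * α ^ 2) * ((b - a) *
        (b * (1 - a * α ^ 2) + a * (1 - b * α ^ 2))) := by
      have : 0 < b * (1 - a * α ^ 2) + a * (1 - b * α ^ 2) :=
        add_pos (mul_pos hb hp) (mul_pos ha hq)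
      have hk4 : 0 < k ^ 4 + 4 * k ^ 2 * α ^ 2 := by positivity
      exact mul_pos hk4 (mul_pos (sub_pos.mpr hab) this)
    have hEq : (1 - a * α ^ 2) ^ 2 * ((1 + b * (k ^ 2 - α ^ 2)) ^ 2 + (2 * b * k * α) ^ 2)
        - ((1 + a * (k ^ 2 - α ^ 2)) ^ 2 + (2 * a * k * α) ^ 2) * (1 - b * α ^ 2) ^ 2
        = 2 * ((1 - a * α ^ 2) * (1 - b * α ^ 2)) * k ^ 2 * (b - a)
          + (k ^ 4 + 4 * k ^ 2 * α ^ 2) * ((b - a) *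
            (b * (1 - a * α ^ 2) + a * (1 - b * α ^ 2))) := by ring
    linarith [h1, h2, hEq]
  · rw [Real.sqrt_lt' (by positivity)]
    rw [div_lt_iff₀ hq]
    nlinarith [hα2]
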